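/- If the complete graph K_{2n} has an interval edge-coloring with shift vector (b_1, b_2, …, b_{n-1}), then it also has an interval edge-coloring whose shift vector is the reversal (b_{n-1}, b_{n-2}, …, b_1). -/

import Mathlib

/-- An interval `t`-coloring of the complete graph on `Fin m`:
a proper edge-coloring with colors in `{1,…,t}`, using every color,
such that the spectrum (set of colors incident to each vertex) is an
interval of consecutive integers. -/
def IsIntervalColoring (m t : ℕ) (c : Sym2 (Fin m) → ℕ) : Prop :=
  (∀ u v w : Fin m, u ≠ v → u ≠ w → v ≠ w → c s(u, v) ≠ c s(u, w)) ∧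
  (∀ u v : Fin m, u ≠ v → c s(u, v) ∈ Finset.Icc 1 t) ∧
  (∀ k : ℕ, 1 ≤ k → k ≤ t → ∃ u v : Fin m, u ≠ v ∧ c s(u, v) = k) ∧
  (∀ v : Fin m, ∃ a b : ℕ,
    {k : ℕ | ∃ u : Fin m, u ≠ v ∧ c s(u, v) = k} = Set.Icc a b)

/-- `W m` is the greatest `t` for which the complete graph on `m` vertices
has an interval `t`-coloring. -/
noncomputable def W (m : ℕ) : ℕ :=
  sSup {t : ℕ | ∃ c : Sym2 (Fin m) → ℕ, IsIntervalColoring m t c}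

/-- The smallest color on an edge incident to `v`. -/
noncomputable def minColor (m : ℕ) (c : Sym2 (Fin m) → ℕ) (v : Fin m) : ℕ :=
  sInf {k : ℕ | ∃ u : Fin m, u ≠ v ∧ c s(u, v) = k}

/-- The list `m_1 ≤ m_2 ≤ … ≤ m_{2n}` of smallest incident colors of the
vertices, in nondecreasing order. -/
noncomputable def sortedMins (m : ℕ) (c : Sym2 (Fin m) → ℕ) : List ℕ :=
  ((Finset.univ : Finset (Fin m)).val.map (minColor m c)).sort (· ≤ ·)

/-- The `i`-th entry `b_i = m_{2i+1} - m_{2i-1}` of the shift vector of a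
coloring of `K_{2n}` (1-based positions; `m_j` is the `j`-th sorted smallest
incident color). Meaningful for `1 ≤ i ≤ n-1`. -/
noncomputable def shiftVec (n : ℕ) (c : Sym2 (Fin (2 * n)) → ℕ) (i : ℕ) : ℕ :=
  (sortedMins (2 * n) c).getD (2 * i) 0 - (sortedMins (2 * n) c).getD (2 * i - 2) 0


-- parity via fixed-point-free involution
lemma even_card_of_invol {α : Type*} [DecidableEq α] (s : Finset α) (f : α → α)
    (h1 : ∀ a ∈ s, f a ∈ s) (h2 : ∀ a ∈ s, f (f a) = a) (h3 : ∀ a ∈ s, f a ≠ a) :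
    Even s.card := by
  induction s using Finset.strongInduction with
  | _ s ih =>
    rcases s.eq_empty_or_nonempty with rfl | ⟨a, ha⟩
    · simp
    · have hfa := h1 a ha
      have hne := h3 a ha
      set s' := (s.erase a).erase (f a) with hs'
      have hss : s' ⊂ s := by
        refine Finset.ssubset_of_subset_of_ssubset ?_ (Finset.erase_ssubset ha)
        exact Finset.erase_subset _ _
      have hmem : ∀ b ∈ s', b ∈ s ∧ b ≠ a ∧ b ≠ f a := by
        intro b hb
        simp only [hs', Finset.mem_erase] at hb
        exact ⟨hb.2.2, hb.2.1, hb.1⟩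
      have hfa' : f a ∈ s.erase a := Finset.mem_erase.2 ⟨hne, hfa⟩
      have hcard : s'.card = s.card - 2 := by
        rw [hs', Finset.card_erase_of_mem hfa', Finset.card_erase_of_mem ha]; omega
      have hev : Even s'.card := by
        refine ih s' hss (fun b hb => ?_) (fun b hb => h2 b (hmem b hb).1)
          (fun b hb => h3 b (hmem b hb).1)
        obtain ⟨hbs, hba, hbfa⟩ := hmem b hb
        simp only [hs', Finset.mem_erase]
        refine ⟨?_, ?_, h1 b hbs⟩
        · intro h; exact hba (by rw [← h2 b hbs, h, h2 a ha])
        · intro h; exact hbfa (by rw [← h2 b hbs, h])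
      have h2le : 2 ≤ s.card := by
        have hsub : ({a, f a} : Finset α) ⊆ s := by
          intro x hx; simp at hx; rcases hx with rfl | rfl <;> assumption
        calc 2 = ({a, f a} : Finset α).card := by rw [Finset.card_pair (Ne.symm hne)]
        _ ≤ s.card := Finset.card_le_card hsub
      obtain ⟨m, hm⟩ := hev
      exact ⟨m + 1, by omega⟩

lemma sorted_pair (L : List ℕ) (hs : L.Pairwise (· ≤ ·))
    (hev : ∀ k : ℕ, Even (L.countP (fun x => decide (x ≤ k))))
    (j : ℕ) (hj : 2*j+1 < L.length) :
    L[2*j] = L[2*j+1] := by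
  have mono : ∀ p q (hp : p < L.length) (hq : q < L.length), p ≤ q → L[p] ≤ L[q] := by
    intro p q hp hq hpq
    rcases eq_or_lt_of_le hpq with rfl | h
    · exact le_refl _
    · exact List.pairwise_iff_getElem.1 hs p q hp hq h
  by_contra hne
  have hlt : L[2*j] < L[2*j+1] :=
    lt_of_le_of_ne (mono _ _ (by omega) hj (by omega)) hne
  set k := L[2*j] with hk
  have hsplit : L.countP (fun x => decide (x ≤ k)) =
      (L.take (2*j+1)).countP (fun x => decide (x ≤ k)) +
      (L.drop (2*j+1)).countP (fun x => decide (x ≤ k)) := by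
    conv_lhs => rw [← List.take_append_drop (2*j+1) L]
    rw [List.countP_append]
  have htake : (L.take (2*j+1)).countP (fun x => decide (x ≤ k)) = 2*j+1 := by
    have hlen : (L.take (2*j+1)).length = 2*j+1 := by
      rw [List.length_take]; omega
    have hcl : (L.take (2*j+1)).countP (fun x => decide (x ≤ k)) = (L.take (2*j+1)).length := by
      rw [List.countP_eq_length]
      intro x hx
      obtain ⟨i, hi, hgx⟩ := List.mem_iff_getElem.1 hx
      have hgt : (L.take (2*j+1))[i] = L[i] := by simp
      simp only [decide_eq_true_eq]
      rw [← hgx, hgt]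
      rw [hlen] at hi
      exact mono _ _ (by omega) (by omega) (by omega)
    rw [hcl, hlen]
  have hdrop : (L.drop (2*j+1)).countP (fun x => decide (x ≤ k)) = 0 := by
    rw [List.countP_eq_zero]
    intro x hx
    obtain ⟨i, hi, hgx⟩ := List.mem_iff_getElem.1 hx
    rw [List.length_drop] at hi
    have hgd : (L.drop (2*j+1))[i] = L[2*j+1+i] := by simp
    have hge : L[2*j+1] ≤ L[2*j+1+i] := mono _ _ (by omega) (by omega) (by omega)
    simp only [decide_eq_true_eq]
    rw [← hgx, hgd]
    omega
  have hE := hev k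
  rw [hsplit, htake, hdrop] at hE
  obtain ⟨m, hm⟩ := hE
  omega

lemma spectrum_spec {n t : ℕ} {c : Sym2 (Fin (2*n)) → ℕ} (hn : 1 ≤ n)
    (hc : IsIntervalColoring (2*n) t c) (v : Fin (2*n)) :
    {k : ℕ | ∃ u : Fin (2*n), u ≠ v ∧ c s(u, v) = k}
      = Set.Icc (minColor (2*n) c v) (minColor (2*n) c v + (2*n - 2)) ∧
    1 ≤ minColor (2*n) c v ∧ minColor (2*n) c v + (2*n - 2) ≤ t := by
  classical
  obtain ⟨hprop, hrange, hsurj, hspec⟩ := hc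
  obtain ⟨a, b, hab⟩ := hspec v
  set F : Finset ℕ := (Finset.univ.erase v).image (fun u => c s(u, v)) with hF
  have hFc : (F : Set ℕ) = {k : ℕ | ∃ u, u ≠ v ∧ c s(u,v) = k} := by
    ext k
    simp only [hF, Finset.coe_image, Finset.coe_erase, Set.mem_image, Set.mem_diff,
      Finset.coe_univ, Set.mem_univ, true_and, Set.mem_singleton_iff, Set.mem_setOf_eq]
  have hinj : Set.InjOn (fun u => c s(u,v)) ((Finset.univ.erase v) : Finset (Fin (2*n))) := by
    intro x hx y hy hxy
    by_contra hne
    simp only [Finset.coe_erase, Set.mem_diff, Set.mem_singleton_iff] at hx hy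
    have h := hprop v x y (Ne.symm hx.2) (Ne.symm hy.2) hne
    rw [Sym2.eq_swap] at h
    rw [show s(v, y) = s(y, v) from Sym2.eq_swap] at h
    exact h hxy
  have hFcard : F.card = 2*n - 1 := by
    rw [hF, Finset.card_image_of_injOn hinj, Finset.card_erase_of_mem (Finset.mem_univ v)]
    simp
  have hFI : F = Finset.Icc a b := by
    apply Finset.coe_injective
    rw [hFc, hab, Finset.coe_Icc]
  have hale : a ≤ b := by
    by_contra h
    have : F = ∅ := by rw [hFI, Finset.Icc_eq_empty (by omega)]
    rw [this] at hFcard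
    simp at hFcard
    omega
  have hcard2 : b + 1 - a = 2*n - 1 := by
    rw [hFI, Nat.card_Icc] at hFcard; exact hFcard
  have hmem : ∀ k ∈ Set.Icc a b, 1 ≤ k ∧ k ≤ t := by
    intro k hk
    have : k ∈ {k : ℕ | ∃ u, u ≠ v ∧ c s(u,v) = k} := by rw [hab]; exact hk
    obtain ⟨u, hu, hcu⟩ := this
    have := hrange u v hu
    rw [hcu, Finset.mem_Icc] at this
    exact this
  have ha1 : 1 ≤ a := (hmem a ⟨le_refl a, hale⟩).1
  have hbt : b ≤ t := (hmem b ⟨hale, le_refl b⟩).2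
  have hmin : minColor (2*n) c v = a := by
    rw [minColor, hab]
    exact csInf_Icc hale
  have hbeq : b = a + (2*n - 2) := by omega
  refine ⟨?_, ?_, ?_⟩
  · rw [hab, hmin, hbeq]
  · omega
  · omega

lemma unique_partner {n t : ℕ} {c : Sym2 (Fin (2*n)) → ℕ}
    (hc : IsIntervalColoring (2*n) t c) {v u w : Fin (2*n)} (hu : u ≠ v) (hw : w ≠ v)
    (h : c s(u, v) = c s(w, v)) : u = w := by
  by_contra hne
  have h' := hc.1 v u w (Ne.symm hu) (Ne.symm hw) hne
  rw [Sym2.eq_swap, show s(v, w) = s(w, v) from Sym2.eq_swap] at h'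
  exact h' h

lemma even_Sk {n t : ℕ} {c : Sym2 (Fin (2*n)) → ℕ} (hn : 1 ≤ n)
    (hc : IsIntervalColoring (2*n) t c) (k : ℕ) :
    Even ((Finset.univ.filter (fun v : Fin (2*n) =>
      minColor (2*n) c v ≤ k ∧ k ≤ minColor (2*n) c v + (2*n - 2))).card) := by
  classical
  set S := Finset.univ.filter (fun v : Fin (2*n) =>
      minColor (2*n) c v ≤ k ∧ k ≤ minColor (2*n) c v + (2*n - 2)) with hS
  have hmemS : ∀ v : Fin (2*n), v ∈ S ↔ (∃ u, u ≠ v ∧ c s(u, v) = k) := by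
    intro v
    rw [hS, Finset.mem_filter]
    have hspec := (spectrum_spec hn hc v).1
    constructor
    · intro ⟨_, h2⟩
      have : k ∈ Set.Icc (minColor (2*n) c v) (minColor (2*n) c v + (2*n - 2)) := h2
      rw [← hspec] at this
      exact this
    · intro h
      have : k ∈ {k : ℕ | ∃ u, u ≠ v ∧ c s(u, v) = k} := h
      rw [hspec] at this
      exact ⟨Finset.mem_univ v, this.1, this.2⟩
  set f : Fin (2*n) → Fin (2*n) := fun v =>
    if h : ∃ u, u ≠ v ∧ c s(u, v) = k then h.choose else v with hf
  have hfspec : ∀ v ∈ S, f v ≠ v ∧ c s(f v, v) = k := by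
    intro v hv
    have h := (hmemS v).1 hv
    rw [hf]; simp only [dif_pos h]
    exact h.choose_spec
  refine even_card_of_invol S f (fun v hv => ?_) (fun v hv => ?_) (fun v hv => (hfspec v hv).1)
  · obtain ⟨hne, hcol⟩ := hfspec v hv
    rw [hmemS]
    exact ⟨v, Ne.symm hne, by rw [Sym2.eq_swap]; exact hcol⟩
  · have hv1 := hfspec v hv
    have hfvS : f v ∈ S := by
      rw [hmemS]
      exact ⟨v, Ne.symm hv1.1, by rw [Sym2.eq_swap]; exact hv1.2⟩
    have hv2 := hfspec (f v) hfvS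
    refine unique_partner hc hv2.1 (Ne.symm hv1.1) ?_
    rw [hv2.2, Sym2.eq_swap]
    exact hv1.2.symm

lemma even_Vk {n t : ℕ} {c : Sym2 (Fin (2*n)) → ℕ} (hn : 1 ≤ n)
    (hc : IsIntervalColoring (2*n) t c) (k : ℕ) :
    Even ((Finset.univ.filter (fun v : Fin (2*n) => minColor (2*n) c v ≤ k)).card) := by
  classical
  induction k using Nat.strong_induction_on with
  | _ k ih =>
    rcases Nat.eq_zero_or_pos k with rfl | hk
    · have : (Finset.univ.filter (fun v : Fin (2*n) => minColor (2*n) c v ≤ 0)) = ∅ := by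
        apply Finset.filter_eq_empty_iff.2
        intro v _
        have := (spectrum_spec hn hc v).2.1
        omega
      rw [this]; simp
    · have hQ : (Finset.univ.filter (fun v : Fin (2*n) => minColor (2*n) c v ≤ k - (2*n - 1)))
          = (Finset.univ.filter (fun v : Fin (2*n) => minColor (2*n) c v ≤ k ∧
              ¬ (k ≤ minColor (2*n) c v + (2*n - 2)))) := by
        ext v
        simp only [Finset.mem_filter, Finset.mem_univ, true_and]
        have h1 := (spectrum_spec hn hc v).2.1
        omega
      have hsplit : (Finset.univ.filter (fun v : Fin (2*n) => minColor (2*n) c v ≤ k)).card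
          = (Finset.univ.filter (fun v : Fin (2*n) =>
              minColor (2*n) c v ≤ k ∧ k ≤ minColor (2*n) c v + (2*n - 2))).card
          + (Finset.univ.filter (fun v : Fin (2*n) =>
              minColor (2*n) c v ≤ k - (2*n - 1))).card := by
        rw [hQ]
        have h := Finset.card_filter_add_card_filter_not
          (s := Finset.univ.filter (fun v : Fin (2*n) => minColor (2*n) c v ≤ k))
          (p := fun v => k ≤ minColor (2*n) c v + (2*n - 2))
        rw [Finset.filter_filter, Finset.filter_filter] at h
        omega
      rw [hsplit]
      have h1 := even_Sk hn hc k
      have h2 := ih (k - (2*n - 1)) (by omega)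
      exact Even.add h1 h2

lemma reversed_coloring {n t : ℕ} {c : Sym2 (Fin (2*n)) → ℕ} (hn : 1 ≤ n)
    (hc : IsIntervalColoring (2*n) t c) :
    IsIntervalColoring (2*n) t (fun e => t + 1 - c e) ∧
    ∀ v : Fin (2*n), minColor (2*n) (fun e => t + 1 - c e) v
      = (t + 1 - (2*n - 2)) - minColor (2*n) c v := by
  have hrange' : ∀ u v : Fin (2*n), u ≠ v → 1 ≤ c s(u,v) ∧ c s(u,v) ≤ t := by
    intro u v huv
    have h := hc.2.1 u v huv
    rw [Finset.mem_Icc] at h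
    exact h
  have hspec' : ∀ v : Fin (2*n),
      {k : ℕ | ∃ u : Fin (2*n), u ≠ v ∧ (fun e => t + 1 - c e) s(u, v) = k}
        = Set.Icc (t + 1 - (minColor (2*n) c v + (2*n - 2))) (t + 1 - minColor (2*n) c v) := by
    intro v
    obtain ⟨hsp, ha1, hat⟩ := spectrum_spec hn hc v
    ext k
    simp only [Set.mem_setOf_eq, Set.mem_Icc]
    constructor
    · rintro ⟨u, hu, rfl⟩
      have hm : c s(u,v) ∈ Set.Icc (minColor (2*n) c v) (minColor (2*n) c v + (2*n - 2)) := by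
        rw [← hsp]; exact ⟨u, hu, rfl⟩
      rw [Set.mem_Icc] at hm
      omega
    · rintro ⟨h1, h2⟩
      have hx : t + 1 - k ∈ Set.Icc (minColor (2*n) c v) (minColor (2*n) c v + (2*n - 2)) := by
        rw [Set.mem_Icc]; omega
      rw [← hsp] at hx
      obtain ⟨u, hu, hcu⟩ := hx
      refine ⟨u, hu, ?_⟩
      omega
  constructor
  · refine ⟨?_, ?_, ?_, ?_⟩
    · intro u v w huv huw hvw h
      have h1 := hrange' u v huv
      have h2 := hrange' u w huw
      have h3 := hc.1 u v w huv huw hvw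
      have h' : t + 1 - c s(u,v) = t + 1 - c s(u,w) := h
      omega
    · intro u v huv
      have h1 := hrange' u v huv
      rw [Finset.mem_Icc]
      refine ⟨?_, ?_⟩ <;> · simp only; omega
    · intro k hk1 hk2
      obtain ⟨u, v, huv, hcu⟩ := hc.2.2.1 (t + 1 - k) (by omega) (by omega)
      refine ⟨u, v, huv, ?_⟩
      simp only
      omega
    · intro v
      exact ⟨_, _, hspec' v⟩
  · intro v
    obtain ⟨hsp, ha1, hat⟩ := spectrum_spec hn hc v
    rw [minColor, hspec' v]
    rw [csInf_Icc (by omega)]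
    omega

lemma sortedMins_length (m : ℕ) (c : Sym2 (Fin m) → ℕ) :
    (sortedMins m c).length = m := by
  rw [sortedMins, Multiset.length_sort, Multiset.card_map]
  simp [Finset.card_univ]

lemma sortedMins_sorted (m : ℕ) (c : Sym2 (Fin m) → ℕ) :
    (sortedMins m c).Pairwise (· ≤ ·) := Multiset.pairwise_sort _ _

lemma sortedMins_countP (m : ℕ) (c : Sym2 (Fin m) → ℕ) (k : ℕ) :
    (sortedMins m c).countP (fun x => decide (x ≤ k))
      = (Finset.univ.filter (fun v : Fin m => minColor m c v ≤ k)).card := by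
  classical
  have h1 : Multiset.countP (fun x => x ≤ k) ((sortedMins m c : List ℕ) : Multiset ℕ)
      = Multiset.countP (fun x => x ≤ k) (Finset.univ.val.map (minColor m c)) := by
    rw [sortedMins, Multiset.sort_eq]
  rw [Multiset.coe_countP] at h1
  rw [h1, Multiset.countP_map]
  rfl

lemma sortedMins_mem (m : ℕ) (c : Sym2 (Fin m) → ℕ) {x : ℕ} (hx : x ∈ sortedMins m c) :
    ∃ v : Fin m, minColor m c v = x := by
  have h : x ∈ ((sortedMins m c : List ℕ) : Multiset ℕ) := hx
  rw [sortedMins, Multiset.sort_eq, Multiset.mem_map] at h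
  obtain ⟨v, _, hv⟩ := h
  exact ⟨v, hv⟩

lemma sortedMins_reversed {n t : ℕ} {c : Sym2 (Fin (2*n)) → ℕ} (hn : 1 ≤ n)
    (hc : IsIntervalColoring (2*n) t c) :
    sortedMins (2*n) (fun e => t + 1 - c e)
      = ((sortedMins (2*n) c).reverse).map (fun x => (t + 1 - (2*n - 2)) - x) := by
  classical
  set K := t + 1 - (2*n - 2) with hK
  set f : ℕ → ℕ := fun x => K - x with hf
  set L := sortedMins (2*n) c with hL
  set C := (L.reverse).map f with hC
  have hperm : ((sortedMins (2*n) (fun e => t + 1 - c e) : List ℕ) : Multiset ℕ)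
      = ((C : List ℕ) : Multiset ℕ) := by
    rw [sortedMins, Multiset.sort_eq, hC, ← Multiset.map_coe, Multiset.coe_reverse, hL,
      sortedMins, Multiset.sort_eq, Multiset.map_map]
    apply Multiset.map_congr rfl
    intro v _
    exact (reversed_coloring hn hc).2 v
  have hsortC : C.Pairwise (· ≤ ·) := by
    rw [hC, List.pairwise_map, List.pairwise_reverse]
    have := sortedMins_sorted (2*n) c
    exact this.imp (fun h => Nat.sub_le_sub_left h K)
  exact List.Perm.eq_of_pairwise' (sortedMins_sorted _ _) hsortC
    (Multiset.coe_eq_coe.1 hperm)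

/-- If `K_{2n}` has an interval edge-coloring with shift vector
`(b_1,…,b_{n-1})`, then it also has one whose shift vector is the reversal
`(b_{n-1},…,b_1)`. -/
theorem statement_18 (n t : ℕ) (c : Sym2 (Fin (2 * n)) → ℕ)
    (hc : IsIntervalColoring (2 * n) t c) :
    ∃ (t' : ℕ) (c' : Sym2 (Fin (2 * n)) → ℕ),
      IsIntervalColoring (2 * n) t' c' ∧
      ∀ i : ℕ, 1 ≤ i → i ≤ n - 1 → shiftVec n c' i = shiftVec n c (n - i) := by
  classical
  by_cases hn : 2 ≤ n
  case neg => exact ⟨t, c, hc, fun i h1 h2 => by omega⟩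
  have hn1 : 1 ≤ n := by omega
  refine ⟨t, fun e => t + 1 - c e, (reversed_coloring hn1 hc).1, ?_⟩
  intro i hi1 hi2
  set K := t + 1 - (2*n - 2) with hK
  set L := sortedMins (2*n) c with hL
  have hlen : L.length = 2*n := sortedMins_length _ _
  have hrev : sortedMins (2*n) (fun e => t + 1 - c e) = (L.reverse).map (fun x => K - x) :=
    sortedMins_reversed hn1 hc
  set M := (L.reverse).map (fun x => K - x) with hM
  have hlenM : M.length = 2*n := by simp [hM, hlen]
  have hgd : ∀ p : ℕ, ∀ hp : p < L.length, L.getD p 0 = L[p] :=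
    fun p hp => List.getD_eq_getElem L 0 hp
  have hgdM : ∀ p : ℕ, ∀ hp : p < M.length, M.getD p 0 = M[p] :=
    fun p hp => List.getD_eq_getElem M 0 hp
  -- pairing
  have hpair : ∀ j : ℕ, 2*j+1 < 2*n → L.getD (2*j) 0 = L.getD (2*j+1) 0 := by
    intro j hj
    rw [hgd (2*j) (by omega), hgd (2*j+1) (by omega)]
    exact sorted_pair L (sortedMins_sorted _ _)
      (fun k => by rw [sortedMins_countP]; exact even_Vk hn1 hc k) j (by omega)
  -- bounds on entries
  have hbd : ∀ p : ℕ, p < 2*n → 1 ≤ L.getD p 0 ∧ L.getD p 0 + (2*n - 2) ≤ t := by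
    intro p hp
    rw [hgd p (by omega)]
    have hmem : L[p] ∈ L := List.getElem_mem _
    obtain ⟨v, hv⟩ := sortedMins_mem (2*n) c hmem
    have := spectrum_spec hn1 hc v
    rw [hv] at this
    exact ⟨this.2.1, this.2.2⟩
  -- getD of the reversed list
  have hmapget : ∀ j : ℕ, j < 2*n →
      M.getD j 0 = K - L.getD (2*n - 1 - j) 0 := by
    intro j hj
    rw [hgdM j (by omega), hgd (2*n - 1 - j) (by omega)]
    simp only [hM, List.getElem_map, List.getElem_reverse, hlen]
  -- compute both sides
  rw [shiftVec, shiftVec, hrev, ← hL]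
  rw [hmapget (2*i) (by omega), hmapget (2*i - 2) (by omega)]
  have e1 : 2*n - 1 - 2*i = 2*(n-i-1) + 1 := by omega
  have e2 : 2*n - 1 - (2*i - 2) = 2*(n-i) + 1 := by omega
  rw [e1, e2, ← hpair (n-i-1) (by omega), ← hpair (n-i) (by omega)]
  have e3 : 2*(n-i) - 2 = 2*(n-i-1) := by omega
  rw [e3]
  have b1 := hbd (2*(n-i-1)) (by omega)
  have b2 := hbd (2*(n-i)) (by omega)
  omega
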